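/- arXiv:1701.00853 — 2 statements merged into one kernel-verified Lean document; each statement's English description precedes it below -/
import Mathlib

section
/- Let L > 0 and q ≥ 1 be real numbers and set θ = (2/5)(1 − 1/q). Then there exists a constant C > 0, depending only on L and q, such that for every twice continuously differentiable function u : [0,L] → ℝ, (∫₀^L |u(x)|^q dx)^{1/q} ≤ C [ (∫₀^L |u(x)| dx)^{1−θ} · (∫₀^L u''(x)² dx)^{θ/2} + ∫₀^L |u(x)| dx ]. -/
open Set MeasureTheory intervalIntegral Filter Real

lemma my_cs {L : ℝ} {g : ℝ → ℝ} (hg : ContinuousOn g (Icc (0:ℝ) L))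
    {c d : ℝ} (hc : 0 ≤ c) (hcd : c < d) (hdL : d ≤ L) :
    ∫ x in c..d, |g x| ≤ Real.sqrt (d - c) * (∫ x in (0:ℝ)..L, (g x) ^ 2) ^ ((1:ℝ)/2) := by
  have h0L : (0:ℝ) ≤ L := hc.trans (hcd.le.trans hdL)
  have hsd : 0 < d - c := by linarith
  have hsubIcc : Icc c d ⊆ Icc (0:ℝ) L := Icc_subset_Icc hc hdL
  have hgc : ContinuousOn g (Icc c d) := hg.mono hsubIcc
  have hint2 : IntervalIntegrable (fun x => (g x)^2) volume 0 L :=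
    ((hg.mul hg).congr (by intro x hx; rw [Pi.mul_apply]; ring)).intervalIntegrable_of_Icc h0L
  have hint2' : IntervalIntegrable (fun x => (g x)^2) volume c d :=
    ((hgc.mul hgc).congr (by intro x hx; rw [Pi.mul_apply]; ring)).intervalIntegrable_of_Icc hcd.le
  have hintabs : IntervalIntegrable (fun x => |g x|) volume c d :=
    hgc.abs.intervalIntegrable_of_Icc hcd.le
  set Q := ∫ x in (0:ℝ)..L, (g x) ^ 2 with hQdef
  have hQ0 : 0 ≤ Q := intervalIntegral.integral_nonneg h0L (fun x hx => sq_nonneg _)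
  have hsub : (∫ x in c..d, (g x) ^ 2) ≤ Q := by
    apply intervalIntegral.integral_mono_interval hc hcd.le hdL ?_ hint2
    filter_upwards with x using sq_nonneg _
  have key : ∀ t : ℝ, 0 < t → (∫ x in c..d, |g x|) ≤ (t * Q + (d - c)/t)/2 := by
    intro t ht
    have hpt : (∫ x in c..d, |g x|) ≤ ∫ x in c..d, (t * (g x)^2 + 1/t)/2 := by
      apply intervalIntegral.integral_mono_on hcd.le hintabs
      · exact ((hint2'.const_mul t).add (intervalIntegrable_const)).div_const 2
      · intro x hx
        have h1 : 0 ≤ (t * |g x| - 1)^2 := sq_nonneg _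
        have h2 : |g x|^2 = (g x)^2 := sq_abs _
        have h3 : t * (t * (g x)^2 + 1/t) = t^2 * (g x)^2 + 1 := by
          field_simp
        have h4 : t * (2 * |g x|) ≤ t^2 * (g x)^2 + 1 := by nlinarith
        rw [← h3] at h4
        have h5 : 2 * |g x| ≤ t * (g x)^2 + 1/t := (mul_le_mul_iff_right₀ ht).mp h4
        linarith
    calc (∫ x in c..d, |g x|) ≤ ∫ x in c..d, (t * (g x)^2 + 1/t)/2 := hpt
      _ = (t * (∫ x in c..d, (g x)^2) + (d - c) * (1/t))/2 := by
          rw [intervalIntegral.integral_div, intervalIntegral.integral_add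
            (hint2'.const_mul t) intervalIntegrable_const,
            intervalIntegral.integral_const_mul, intervalIntegral.integral_const, smul_eq_mul]
      _ ≤ (t * Q + (d - c)/t)/2 := by
          have := mul_le_mul_of_nonneg_left hsub ht.le
          rw [mul_one_div]
          linarith
  rcases eq_or_lt_of_le hQ0 with hQz | hQpos
  · have hle0 : (∫ x in c..d, |g x|) ≤ 0 := by
      apply le_of_forall_pos_le_add
      intro ε hε
      have h := key ((d - c)/(2*ε)) (div_pos hsd (by linarith))
      rw [← hQz] at h
      have e : ((d - c)/(2*ε) * 0 + (d - c)/((d - c)/(2*ε)))/2 = ε := by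
        rw [mul_zero, zero_add]
        field_simp
      rw [e] at h
      linarith
    calc (∫ x in c..d, |g x|) ≤ 0 := hle0
      _ ≤ _ := by positivity
  · have ht : 0 < Real.sqrt (d - c) / Real.sqrt Q := by positivity
    have h := key _ ht
    have hs1 : Real.sqrt (d-c) * Real.sqrt (d-c) = d - c := Real.mul_self_sqrt hsd.le
    have hs2 : Real.sqrt Q * Real.sqrt Q = Q := Real.mul_self_sqrt hQ0
    have e1 : (Real.sqrt (d - c) / Real.sqrt Q) * Q = Real.sqrt (d - c) * Real.sqrt Q := by
      rw [div_mul_eq_mul_div, eq_comm, eq_div_iff (by positivity)]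
      linear_combination Real.sqrt (d-c) * hs2
    have e2 : (d - c) / (Real.sqrt (d - c) / Real.sqrt Q)
        = Real.sqrt (d - c) * Real.sqrt Q := by
      rw [div_div_eq_mul_div, div_eq_iff (by positivity)]
      linear_combination (-Real.sqrt Q) * hs1
    rw [e1, e2, Real.sqrt_eq_rpow Q] at h
    calc (∫ x in c..d, |g x|) ≤ _ := h
      _ = Real.sqrt (d-c) * Q ^ ((1:ℝ)/2) := by ring


lemma my_ftc {L : ℝ} {f f' : ℝ → ℝ}
    (hf : ∀ x ∈ Icc (0:ℝ) L, HasDerivWithinAt f (f' x) (Icc (0:ℝ) L) x)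
    (hf'c : ContinuousOn f' (Icc (0:ℝ) L))
    {a b : ℝ} (ha : a ∈ Icc (0:ℝ) L) (hb : b ∈ Icc (0:ℝ) L) (hab : a ≤ b) :
    ∫ x in a..b, f' x = f b - f a := by
  have hfc : ContinuousOn f (Icc (0:ℝ) L) := fun x hx => (hf x hx).continuousWithinAt
  apply integral_eq_sub_of_hasDeriv_right_of_le hab
    (hfc.mono (Icc_subset_Icc ha.1 hb.2))
  · intro x hx
    have hxi : x ∈ Ioo (0:ℝ) L := ⟨lt_of_le_of_lt ha.1 hx.1, lt_of_lt_of_le hx.2 hb.2⟩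
    exact ((hf x (Ioo_subset_Icc_self hxi)).hasDerivAt
      (Icc_mem_nhds hxi.1 hxi.2)).hasDerivWithinAt
  · exact (hf'c.mono (by rw [uIcc_of_le hab]; exact Icc_subset_Icc ha.1 hb.2)).intervalIntegrable



lemma my_core {L : ℝ} (hL : 0 < L) {u u' u'' : ℝ → ℝ}
    (hu : ∀ x ∈ Icc (0:ℝ) L, HasDerivWithinAt u (u' x) (Icc (0:ℝ) L) x)
    (hu' : ∀ x ∈ Icc (0:ℝ) L, HasDerivWithinAt u' (u'' x) (Icc (0:ℝ) L) x)
    (hu''c : ContinuousOn u'' (Icc (0:ℝ) L))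
    {x₀ : ℝ} (hx₀ : x₀ ∈ Icc (0:ℝ) L) (hmax : ∀ x ∈ Icc (0:ℝ) L, |u x| ≤ |u x₀|)
    {ℓ : ℝ} (hℓ : 0 < ℓ) (hℓL : 4*ℓ ≤ L) :
    |u x₀| ≤ 2*(∫ x in (0:ℝ)..L, |u x|)/ℓ
      + 4*ℓ*Real.sqrt ℓ * ((∫ x in (0:ℝ)..L, (u'' x)^2) ^ ((1:ℝ)/2)) := by
  have h0L : (0:ℝ) ≤ L := hL.le
  have huc : ContinuousOn u (Icc (0:ℝ) L) := fun x hx => (hu x hx).continuousWithinAt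
  have hu'c : ContinuousOn u' (Icc (0:ℝ) L) := fun x hx => (hu' x hx).continuousWithinAt
  set M := |u x₀| with hMdef
  set N := ∫ x in (0:ℝ)..L, |u x| with hNdef
  set S := (∫ x in (0:ℝ)..L, (u'' x)^2) ^ ((1:ℝ)/2) with hSdef
  have hS0 : 0 ≤ S := Real.rpow_nonneg
    (intervalIntegral.integral_nonneg h0L (fun x _ => sq_nonneg _)) _
  -- the interval I' = [a, a+4ℓ] containing x₀
  set a := min x₀ (L - 4*ℓ) with hadef
  have ha0 : 0 ≤ a := le_min hx₀.1 (by linarith)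
  have hax : a ≤ x₀ := min_le_left _ _
  have ha4L : a + 4*ℓ ≤ L := by have := min_le_right x₀ (L - 4*ℓ); linarith
  have hxa4 : x₀ ≤ a + 4*ℓ := by
    rcases le_total x₀ (L - 4*ℓ) with h | h
    · rw [hadef, min_eq_left h]; linarith
    · rw [hadef, min_eq_right h]; linarith [hx₀.2]
  -- the interval I = [b, b+ℓ] ⊆ I' containing x₀
  set b := min x₀ (a + 3*ℓ) with hbdef
  have hab : a ≤ b := le_min hax (by linarith)
  have hbx : b ≤ x₀ := min_le_left _ _
  have hb4 : b + ℓ ≤ a + 4*ℓ := by have := min_le_right x₀ (a + 3*ℓ); linarith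
  have hxb : x₀ ≤ b + ℓ := by
    rcases le_total x₀ (a + 3*ℓ) with h | h
    · rw [hbdef, min_eq_left h]; linarith
    · rw [hbdef, min_eq_right h]; linarith
  have hb0 : 0 ≤ b := ha0.trans hab
  have hbL : b + ℓ ≤ L := by linarith
  have hI'sub : Icc a (a + 4*ℓ) ⊆ Icc (0:ℝ) L := Icc_subset_Icc ha0 ha4L
  have habs_int : IntervalIntegrable (fun x => |u'' x|) volume a (a+4*ℓ) :=
    ((hu''c.mono hI'sub).abs).intervalIntegrable_of_Icc (by linarith)
  -- MVT on [a, a+4ℓ]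
  obtain ⟨z, hz, hzslope⟩ := exists_hasDerivAt_eq_slope u u' (show a < a + 4*ℓ by linarith)
    (huc.mono hI'sub)
    (fun x hx => (hu x (hI'sub (Ioo_subset_Icc_self hx))).hasDerivAt
      (Icc_mem_nhds (lt_of_le_of_lt ha0 hx.1) (lt_of_lt_of_le hx.2 ha4L)))
  have hzmem : z ∈ Icc (0:ℝ) L := hI'sub (Ioo_subset_Icc_self hz)
  have hu'z : |u' z| ≤ M / (2*ℓ) := by
    rw [hzslope, abs_div]
    rw [abs_of_pos (show (0:ℝ) < a + 4*ℓ - a by linarith)]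
    have h1 : |u (a + 4*ℓ) - u a| ≤ 2 * M := by
      have := hmax (a + 4*ℓ) ⟨by linarith, ha4L⟩
      have := hmax a ⟨ha0, by linarith⟩
      calc |u (a + 4*ℓ) - u a| ≤ |u (a+4*ℓ)| + |u a| := abs_sub _ _
        _ ≤ 2 * M := by linarith
    rw [div_le_div_iff₀ (by linarith) (by linarith)]
    calc |u (a + 4*ℓ) - u a| * (2*ℓ) ≤ 2*M*(2*ℓ) := by nlinarith
      _ = M * (a + 4*ℓ - a) := by ring
  -- u' bound on I'
  have hu'bound : ∀ x ∈ Icc a (a + 4*ℓ), |u' x| ≤ M/(2*ℓ) + 2*Real.sqrt ℓ * S := by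
    intro x hx
    have hxmem : x ∈ Icc (0:ℝ) L := hI'sub hx
    have hcs : (∫ t in a..(a+4*ℓ), |u'' t|) ≤ 2 * Real.sqrt ℓ * S := by
      have h := my_cs (L := L) hu''c ha0 (show a < a + 4*ℓ by linarith) ha4L
      have h4 : Real.sqrt (a + 4*ℓ - a) = 2 * Real.sqrt ℓ := by
        rw [show a + 4*ℓ - a = 4*ℓ by ring, show (4:ℝ)*ℓ = 2^2*ℓ by norm_num,
          Real.sqrt_mul (by positivity), Real.sqrt_sq (by norm_num)]
      rw [h4] at h
      exact h
    have habs : |∫ t in z..x, u'' t| ≤ ∫ t in a..(a+4*ℓ), |u'' t| := by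
      rcases le_total z x with hzx | hxz
      · calc |∫ t in z..x, u'' t| ≤ ∫ t in z..x, |u'' t| :=
              intervalIntegral.abs_integral_le_integral_abs hzx
          _ ≤ ∫ t in a..(a+4*ℓ), |u'' t| := by
              apply intervalIntegral.integral_mono_interval hz.1.le hzx hx.2 ?_ habs_int
              filter_upwards with t using abs_nonneg _
      · rw [intervalIntegral.integral_symm, abs_neg]
        calc |∫ t in x..z, u'' t| ≤ ∫ t in x..z, |u'' t| :=
              intervalIntegral.abs_integral_le_integral_abs hxz
          _ ≤ ∫ t in a..(a+4*ℓ), |u'' t| := by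
              apply intervalIntegral.integral_mono_interval hx.1 hxz hz.2.le ?_ habs_int
              filter_upwards with t using abs_nonneg _
    have hftc : u' x - u' z = ∫ t in z..x, u'' t := by
      rcases le_total z x with hzx | hxz
      · rw [my_ftc hu' hu''c hzmem hxmem hzx]
      · rw [intervalIntegral.integral_symm, my_ftc hu' hu''c hxmem hzmem hxz]; ring
    calc |u' x| = |u' z + (u' x - u' z)| := by ring_nf
      _ ≤ |u' z| + |u' x - u' z| := abs_add_le _ _
      _ ≤ M/(2*ℓ) + 2*Real.sqrt ℓ * S := by
          rw [hftc]
          exact add_le_add hu'z (habs.trans hcs)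
  -- integral of |u'| over I
  have hIsub : Icc b (b + ℓ) ⊆ Icc (0:ℝ) L := Icc_subset_Icc hb0 hbL
  have hIsubI' : Icc b (b + ℓ) ⊆ Icc a (a + 4*ℓ) := Icc_subset_Icc hab hb4
  have hu'int : IntervalIntegrable (fun t => |u' t|) volume b (b+ℓ) :=
    ((hu'c.mono hIsub).abs).intervalIntegrable_of_Icc (by linarith)
  have hIu' : (∫ t in b..(b+ℓ), |u' t|) ≤ ℓ * (M/(2*ℓ) + 2*Real.sqrt ℓ * S) := by
    calc (∫ t in b..(b+ℓ), |u' t|) ≤ ∫ t in b..(b+ℓ), (M/(2*ℓ) + 2*Real.sqrt ℓ * S) := by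
          apply intervalIntegral.integral_mono_on (by linarith) hu'int intervalIntegrable_const
          intro t ht
          exact hu'bound t (hIsubI' ht)
      _ = ℓ * (M/(2*ℓ) + 2*Real.sqrt ℓ * S) := by
          rw [intervalIntegral.integral_const, smul_eq_mul]; ring_nf
  -- minimum of |u| on I
  obtain ⟨y, hy, hymin⟩ := isCompact_Icc.exists_isMinOn (nonempty_Icc.2 (by linarith))
    ((continuous_abs.comp_continuousOn (huc.mono hIsub)))
  have hymin' : ∀ t ∈ Icc b (b+ℓ), |u y| ≤ |u t| := fun t ht => hymin ht
  have huy : |u y| ≤ N / ℓ := by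
    rw [le_div_iff₀ hℓ]
    have h1 : |u y| * ℓ = ∫ t in b..(b+ℓ), |u y| := by
      rw [intervalIntegral.integral_const, smul_eq_mul]; ring
    rw [h1]
    calc (∫ t in b..(b+ℓ), |u y|) ≤ ∫ t in b..(b+ℓ), |u t| := by
          apply intervalIntegral.integral_mono_on (by linarith) intervalIntegrable_const
            (((huc.mono hIsub).abs).intervalIntegrable_of_Icc (by linarith))
          exact hymin'
      _ ≤ N := by
          apply intervalIntegral.integral_mono_interval hb0 (by linarith) hbL ?_
            ((huc.abs).intervalIntegrable_of_Icc h0L)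
          filter_upwards with t using abs_nonneg _
  -- FTC from y to x₀
  have hymem : y ∈ Icc (0:ℝ) L := hIsub hy
  have hx₀I : x₀ ∈ Icc b (b + ℓ) := ⟨hbx, hxb⟩
  have habs2 : |∫ t in y..x₀, u' t| ≤ ∫ t in b..(b+ℓ), |u' t| := by
    rcases le_total y x₀ with hyx | hxy
    · calc |∫ t in y..x₀, u' t| ≤ ∫ t in y..x₀, |u' t| :=
            intervalIntegral.abs_integral_le_integral_abs hyx
        _ ≤ ∫ t in b..(b+ℓ), |u' t| := by
            apply intervalIntegral.integral_mono_interval hy.1 hyx hx₀I.2 ?_ hu'int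
            filter_upwards with t using abs_nonneg _
    · rw [intervalIntegral.integral_symm, abs_neg]
      calc |∫ t in x₀..y, u' t| ≤ ∫ t in x₀..y, |u' t| :=
            intervalIntegral.abs_integral_le_integral_abs hxy
        _ ≤ ∫ t in b..(b+ℓ), |u' t| := by
            apply intervalIntegral.integral_mono_interval hx₀I.1 hxy hy.2 ?_ hu'int
            filter_upwards with t using abs_nonneg _
  have hftc2 : u x₀ - u y = ∫ t in y..x₀, u' t := by
    rcases le_total y x₀ with hyx | hxy
    · rw [my_ftc hu hu'c hymem hx₀ hyx]
    · rw [intervalIntegral.integral_symm, my_ftc hu hu'c hx₀ hymem hxy]; ring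
  have hMle : M ≤ N/ℓ + ℓ * (M/(2*ℓ) + 2*Real.sqrt ℓ * S) := by
    calc M = |u y + (u x₀ - u y)| := by rw [hMdef]; ring_nf
      _ ≤ |u y| + |u x₀ - u y| := abs_add_le _ _
      _ ≤ N/ℓ + ℓ * (M/(2*ℓ) + 2*Real.sqrt ℓ * S) := by
          rw [hftc2]
          exact add_le_add huy (habs2.trans hIu')
  have e1 : ℓ * (M/(2*ℓ) + 2*Real.sqrt ℓ * S) = M/2 + 2*ℓ*Real.sqrt ℓ*S := by
    field_simp
  have e2 : 2*N/ℓ = 2*(N/ℓ) := by ring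
  rw [e1] at hMle
  rw [e2]
  linarith


lemma my_opt {L M N S : ℝ} (hL : 0 < L) (hM : 0 ≤ M) (hN : 0 ≤ N) (hS : 0 ≤ S)
    (h : ∀ ℓ : ℝ, 0 < ℓ → 4*ℓ ≤ L → M ≤ 2*N/ℓ + 4*ℓ*Real.sqrt ℓ*S) :
    M ≤ 6 * (N ^ ((3:ℝ)/5) * S ^ ((2:ℝ)/5)) + (24/L) * N := by
  have hP0 : 0 ≤ N ^ ((3:ℝ)/5) * S ^ ((2:ℝ)/5) :=
    mul_nonneg (Real.rpow_nonneg hN _) (Real.rpow_nonneg hS _)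
  have hNL : 0 ≤ N / L := div_nonneg hN hL.le
  have hrw : (24/L)*N = 24*(N/L) := by ring
  rcases eq_or_lt_of_le hS with hS0 | hSpos
  · -- S = 0
    have h1 := h (L/4) (by positivity) (by linarith)
    rw [← hS0] at h1
    have e1 : 2*N/(L/4) + 4*(L/4)*Real.sqrt (L/4)*0 = 8*(N/L) := by
      field_simp; ring
    rw [e1] at h1
    rw [hrw]
    linarith
  rcases eq_or_lt_of_le hN with hN0 | hNpos
  · -- N = 0, S > 0
    have hev : ∀ᶠ ℓ in nhdsWithin (0:ℝ) (Ioi 0), M ≤ 4*ℓ*Real.sqrt ℓ*S := by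
      filter_upwards [Ioc_mem_nhdsGT_of_mem
        (⟨le_refl (0:ℝ), by positivity⟩ : (0:ℝ) ∈ Ico (0:ℝ) (L/4))] with ℓ hℓ
      have h1 := h ℓ hℓ.1 (by linarith [hℓ.2])
      rw [← hN0] at h1
      have h2 : 2*(0:ℝ)/ℓ = 0 := by ring
      linarith [h1, h2]
    have htd : Tendsto (fun ℓ : ℝ => 4*ℓ*Real.sqrt ℓ*S) (nhdsWithin (0:ℝ) (Ioi 0)) (nhds 0) := by
      have hcont : Continuous fun ℓ : ℝ => 4*ℓ*Real.sqrt ℓ*S := by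
        continuity
      have := hcont.tendsto 0
      simp only [mul_zero, zero_mul, Real.sqrt_zero] at this
      exact this.mono_left nhdsWithin_le_nhds
    have hM0 : M ≤ 0 := ge_of_tendsto htd hev
    subst hN0
    rw [Real.zero_rpow (by norm_num : (3:ℝ)/5 ≠ 0)]
    simpa using hM0
  -- N, S > 0
  set P := N ^ ((3:ℝ)/5) * S ^ ((2:ℝ)/5) with hPdef
  have hNS0 : (0:ℝ) ≤ N/S := div_nonneg hN hS
  have hNSpos : (0:ℝ) < N/S := div_pos hNpos hSpos
  set l := (N/S) ^ ((2:ℝ)/5) with hldef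
  have hl : 0 < l := Real.rpow_pos_of_pos hNSpos _
  have hdiv3 : ((N/S) : ℝ) ^ ((3:ℝ)/5) = N ^ ((3:ℝ)/5) / S ^ ((3:ℝ)/5) :=
    Real.div_rpow hN hS _
  have hdiv2 : ((N/S) : ℝ) ^ ((2:ℝ)/5) = N ^ ((2:ℝ)/5) / S ^ ((2:ℝ)/5) :=
    Real.div_rpow hN hS _
  have hl32 : l * Real.sqrt l = (N/S) ^ ((3:ℝ)/5) := by
    rw [Real.sqrt_eq_rpow, hldef, ← Real.rpow_mul hNS0, ← Real.rpow_add hNSpos]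
    norm_num
  have hSr : S / S ^ ((3:ℝ)/5) = S ^ ((2:ℝ)/5) := by
    rw [show ((2:ℝ)/5) = 1 - 3/5 by norm_num, Real.rpow_sub hSpos, Real.rpow_one]
  have hNr : N / N ^ ((2:ℝ)/5) = N ^ ((3:ℝ)/5) := by
    rw [show ((3:ℝ)/5) = 1 - 2/5 by norm_num, Real.rpow_sub hNpos, Real.rpow_one]
  have id2 : 4*l*Real.sqrt l*S = 4*P := by
    rw [show 4*l*Real.sqrt l*S = 4*(l*Real.sqrt l)*S by ring, hl32, hdiv3, hPdef]
    rw [show 4*(N ^ ((3:ℝ)/5) / S^((3:ℝ)/5))*S = 4*(N^((3:ℝ)/5) * (S / S^((3:ℝ)/5))) by ring,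
      hSr]
  have hN25 : (0:ℝ) < N ^ ((2:ℝ)/5) := Real.rpow_pos_of_pos hNpos _
  have hS25 : (0:ℝ) < S ^ ((2:ℝ)/5) := Real.rpow_pos_of_pos hSpos _
  have id1 : 2*N/l = 2*P := by
    rw [hldef, hdiv2, hPdef, ← hNr]
    field_simp
  rcases le_or_gt (4*l) L with hcase | hcase
  · have h1 := h l hl hcase
    rw [id1, id2] at h1
    rw [hrw]
    linarith
  · set r := L/4 with hrdef
    have hr : 0 < r := by positivity
    have h1 := h r hr (by rw [hrdef]; linarith)
    have e1 : 2*N/r = 8*(N/L) := by rw [hrdef]; field_simp; ring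
    have hr32 : r * Real.sqrt r = r ^ ((3:ℝ)/2) := by
      rw [Real.sqrt_eq_rpow]
      nth_rewrite 1 [← Real.rpow_one r]
      rw [← Real.rpow_add hr]
      norm_num
    have hlt : r < l := by linarith
    have h52 : r ^ ((5:ℝ)/2) < N/S := by
      have := Real.rpow_lt_rpow hr.le hlt (by norm_num : (0:ℝ) < 5/2)
      rw [hldef, ← Real.rpow_mul hNS0] at this
      norm_num at this
      exact this
    have hr32eq : r ^ ((3:ℝ)/2) = r ^ ((5:ℝ)/2) / r := by
      rw [show ((3:ℝ)/2) = 5/2 - 1 by norm_num, Real.rpow_sub hr, Real.rpow_one]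
    have hterm : 4*r*Real.sqrt r*S ≤ 16*(N/L) := by
      calc 4*r*Real.sqrt r*S = 4*(r ^ ((5:ℝ)/2) / r)*S := by
            rw [show 4*r*Real.sqrt r*S = 4*(r*Real.sqrt r)*S by ring, hr32, hr32eq]
        _ ≤ 4*((N/S)/r)*S := by gcongr
        _ = 16*(N/L) := by rw [hrdef]; field_simp; ring
    rw [e1] at h1
    rw [hrw]
    linarith


section helpers
lemma my_rpow_add_le {x y p : ℝ} (hx : 0 ≤ x) (hy : 0 ≤ y) (hp : 0 ≤ p) (hp1 : p ≤ 1) :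
    (x + y) ^ p ≤ x ^ p + y ^ p := by
  have h := NNReal.rpow_add_le_add_rpow x.toNNReal y.toNNReal hp hp1
  calc (x + y) ^ p = ((x.toNNReal + y.toNNReal : NNReal) : ℝ) ^ p := by
        rw [NNReal.coe_add, Real.coe_toNNReal _ hx, Real.coe_toNNReal _ hy]
    _ = (((x.toNNReal + y.toNNReal) ^ p : NNReal) : ℝ) := by
        rw [← NNReal.coe_rpow]
    _ ≤ ((x.toNNReal ^ p + y.toNNReal ^ p : NNReal) : ℝ) := by exact_mod_cast h
    _ = x ^ p + y ^ p := by
        rw [NNReal.coe_add, NNReal.coe_rpow, NNReal.coe_rpow,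
          Real.coe_toNNReal _ hx, Real.coe_toNNReal _ hy]
end helpers

set_option maxHeartbeats 1000000

/-- One-dimensional Gagliardo–Nirenberg interpolation on `[0,L]`:
`‖u‖_q ≤ C (‖u‖₁^{1−θ} ‖u''‖₂^θ + ‖u‖₁)` with `θ = (2/5)(1 − 1/q)`. -/
theorem gagliardo_nirenberg_L1_Hxx
    (L q : ℝ) (hL : 0 < L) (hq : 1 ≤ q) :
    ∃ C : ℝ, 0 < C ∧
      ∀ u u' u'' : ℝ → ℝ,
        (∀ x ∈ Icc (0:ℝ) L, HasDerivWithinAt u (u' x) (Icc (0:ℝ) L) x) →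
        (∀ x ∈ Icc (0:ℝ) L, HasDerivWithinAt u' (u'' x) (Icc (0:ℝ) L) x) →
        ContinuousOn u'' (Icc (0:ℝ) L) →
        (∫ x in (0:ℝ)..L, |u x| ^ q) ^ (1 / q)
          ≤ C * ((∫ x in (0:ℝ)..L, |u x|) ^ (1 - (2 / 5) * (1 - 1 / q))
                  * (∫ x in (0:ℝ)..L, (u'' x) ^ 2) ^ ((2 / 5) * (1 - 1 / q) / 2)
                + ∫ x in (0:ℝ)..L, |u x|) := by
  have hq0 : (0:ℝ) < q := by linarith
  have hqinv : 0 < 1/q := by positivity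
  have hqinv1 : 1/q ≤ 1 := by
    rw [div_le_one hq0]; linarith
  set α : ℝ := 1 - 1/q with hαdef
  have hα0 : 0 ≤ α := by simp only [hαdef]; linarith
  have hα1 : α ≤ 1 := by simp only [hαdef]; linarith
  set C : ℝ := (6:ℝ) ^ α + (24/L) ^ α with hCdef
  have h6α : (0:ℝ) < (6:ℝ) ^ α := Real.rpow_pos_of_pos (by norm_num) _
  have h24α : (0:ℝ) < (24/L) ^ α := Real.rpow_pos_of_pos (by positivity) _
  refine ⟨C, by positivity, ?_⟩
  intro u u' u'' hu hu' hu''c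
  have h0L : (0:ℝ) ≤ L := hL.le
  have huc : ContinuousOn u (Icc (0:ℝ) L) := fun x hx => (hu x hx).continuousWithinAt
  obtain ⟨x₀, hx₀, hmaxOn⟩ := isCompact_Icc.exists_isMaxOn (nonempty_Icc.2 h0L)
    (continuous_abs.comp_continuousOn huc)
  have hmax : ∀ x ∈ Icc (0:ℝ) L, |u x| ≤ |u x₀| := fun x hx => hmaxOn hx
  set M := |u x₀| with hMdef
  have hM0 : 0 ≤ M := abs_nonneg _
  set N := ∫ x in (0:ℝ)..L, |u x| with hNdef
  have hN0 : 0 ≤ N := intervalIntegral.integral_nonneg h0L (fun x _ => abs_nonneg _)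
  set Q := ∫ x in (0:ℝ)..L, (u'' x)^2 with hQdef
  have hQ0 : 0 ≤ Q := intervalIntegral.integral_nonneg h0L (fun x _ => sq_nonneg _)
  set S := Q ^ ((1:ℝ)/2) with hSdef
  have hS0 : 0 ≤ S := Real.rpow_nonneg hQ0 _
  -- main sup bound
  have hMbound : M ≤ 6 * (N ^ ((3:ℝ)/5) * S ^ ((2:ℝ)/5)) + (24/L) * N :=
    my_opt hL hM0 hN0 hS0 (fun ℓ hℓ hℓL => my_core hL hu hu' hu''c hx₀ hmax hℓ hℓL)
  -- Lq interpolation with L∞ and L1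
  have hjq_cont : ContinuousOn (fun x => |u x| ^ q) (Icc (0:ℝ) L) :=
    (huc.abs).rpow_const (fun x _ => Or.inr hq0.le)
  have hu_abs_int : IntervalIntegrable (fun x => |u x|) volume 0 L :=
    (huc.abs).intervalIntegrable_of_Icc h0L
  have h1 : (∫ x in (0:ℝ)..L, |u x| ^ q) ≤ M ^ (q - 1) * N := by
    have hle : ∀ x ∈ Icc (0:ℝ) L, |u x| ^ q ≤ M ^ (q-1) * |u x| := by
      intro x hx
      have e : |u x| ^ q = |u x| ^ (q-1) * |u x| := by
        nth_rewrite 1 [show q = (q-1) + 1 by ring]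
        rw [Real.rpow_add' (abs_nonneg _) (by simpa using hq0.ne'), Real.rpow_one]
      rw [e]
      exact mul_le_mul_of_nonneg_right
        (Real.rpow_le_rpow (abs_nonneg _) (hmax x hx) (by linarith)) (abs_nonneg _)
    calc (∫ x in (0:ℝ)..L, |u x| ^ q) ≤ ∫ x in (0:ℝ)..L, M ^ (q-1) * |u x| := by
          apply intervalIntegral.integral_mono_on h0L
            (hjq_cont.intervalIntegrable_of_Icc h0L) (hu_abs_int.const_mul _) hle
      _ = M ^ (q-1) * N := by rw [intervalIntegral.integral_const_mul]
  have hLq : (∫ x in (0:ℝ)..L, |u x| ^ q) ^ (1/q) ≤ M ^ α * N ^ (1/q) := by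
    have h2 : (∫ x in (0:ℝ)..L, |u x| ^ q) ^ (1/q) ≤ (M ^ (q-1) * N) ^ (1/q) :=
      Real.rpow_le_rpow (intervalIntegral.integral_nonneg h0L
        (fun x _ => Real.rpow_nonneg (abs_nonneg _) _)) h1 hqinv.le
    have h3 : (M ^ (q-1) * N) ^ (1/q) = M ^ α * N ^ (1/q) := by
      rw [Real.mul_rpow (Real.rpow_nonneg hM0 _) hN0, ← Real.rpow_mul hM0,
        show (q-1)*(1/q) = α by rw [hαdef]; field_simp]
    rw [h3] at h2
    exact h2
  -- split by N = 0 or N > 0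
  clear_value M N Q S α C
  rcases eq_or_lt_of_le hN0 with hNz | hNpos
  · -- N = 0
    have hMz : M ≤ 0 := by
      rw [← hNz] at hMbound
      rw [Real.zero_rpow (by norm_num : (3:ℝ)/5 ≠ 0)] at hMbound
      simpa using hMbound
    have hM : M = 0 := le_antisymm hMz hM0
    have hint0 : (∫ x in (0:ℝ)..L, |u x| ^ q) = 0 := by
      apply le_antisymm
      · calc (∫ x in (0:ℝ)..L, |u x| ^ q) ≤ M ^ (q-1) * N := h1
          _ = 0 := by rw [← hNz, mul_zero]
      · exact intervalIntegral.integral_nonneg h0L (fun x _ => Real.rpow_nonneg (abs_nonneg _) _)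
    rw [hint0, Real.zero_rpow (by positivity : 1/q ≠ 0)]
    rw [← hNz, Real.zero_rpow (ne_of_gt (show (0:ℝ) < 1 - 2/5*α by nlinarith))]
    simp
  · -- N > 0
    have hDsum : M ^ α ≤ (6:ℝ)^α * (N ^ ((3:ℝ)/5) * S ^ ((2:ℝ)/5))^α + (24/L)^α * N^α := by
      calc M ^ α ≤ (6 * (N ^ ((3:ℝ)/5) * S ^ ((2:ℝ)/5)) + (24/L) * N) ^ α :=
            Real.rpow_le_rpow hM0 hMbound hα0
        _ ≤ (6 * (N ^ ((3:ℝ)/5) * S ^ ((2:ℝ)/5)))^α + ((24/L) * N)^α :=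
            my_rpow_add_le (by positivity) (by positivity) hα0 hα1
        _ = (6:ℝ)^α * (N ^ ((3:ℝ)/5) * S ^ ((2:ℝ)/5))^α + (24/L)^α * N^α := by
            rw [Real.mul_rpow (by norm_num) (by positivity),
              Real.mul_rpow (by positivity) hN0]
    have hNq0 : 0 ≤ N ^ (1/q) := Real.rpow_nonneg hN0 _
    have step : (∫ x in (0:ℝ)..L, |u x| ^ q) ^ (1/q)
        ≤ ((6:ℝ)^α * (N ^ ((3:ℝ)/5) * S ^ ((2:ℝ)/5))^α + (24/L)^α * N^α) * N ^ (1/q) :=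
      hLq.trans (mul_le_mul_of_nonneg_right hDsum hNq0)
    -- simplify the RHS of step
    have e1 : (N ^ ((3:ℝ)/5) * S ^ ((2:ℝ)/5))^α * N ^ (1/q)
        = N ^ (1 - 2/5*α) * Q ^ (2/5*α/2) := by
      rw [Real.mul_rpow (Real.rpow_nonneg hN0 _) (Real.rpow_nonneg hS0 _),
        ← Real.rpow_mul hN0, ← Real.rpow_mul hS0, hSdef, ← Real.rpow_mul hQ0]
      rw [show (N ^ ((3:ℝ)/5 * α) * Q ^ (1/2 * ((2:ℝ)/5 * α)) * N ^ (1/q))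
          = (N ^ ((3:ℝ)/5 * α) * N ^ (1/q)) * Q ^ (1/2 * ((2:ℝ)/5 * α)) by ring,
        ← Real.rpow_add hNpos]
      congr 1
      · congr 1
        rw [hαdef]; ring
      · congr 1
        rw [hαdef]; ring
    have e2 : N ^ α * N ^ (1/q) = N := by
      rw [← Real.rpow_add hNpos, hαdef]
      norm_num
    calc (∫ x in (0:ℝ)..L, |u x| ^ q) ^ (1/q)
        ≤ ((6:ℝ)^α * (N ^ ((3:ℝ)/5) * S ^ ((2:ℝ)/5))^α + (24/L)^α * N^α) * N ^ (1/q) := step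
      _ = (6:ℝ)^α * (N ^ (1 - 2/5*α) * Q ^ (2/5*α/2))
            + (24/L)^α * N := by
          rw [add_mul, mul_assoc, e1, mul_assoc, e2]
      _ ≤ C * (N ^ (1 - 2/5*α) * Q ^ (2/5*α/2) + N) := by
          have hT1 : 0 ≤ N ^ (1 - 2/5*α) * Q ^ (2/5*α/2) :=
            mul_nonneg (Real.rpow_nonneg hN0 _) (Real.rpow_nonneg hQ0 _)
          have hc1 : (6:ℝ)^α ≤ C := by rw [hCdef]; linarith
          have hc2 : (24/L)^α ≤ C := by rw [hCdef]; linarith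
          nlinarith [mul_le_mul_of_nonneg_right hc1 hT1, mul_le_mul_of_nonneg_right hc2 hN0]
end

section
/- Let L > 0. Then there exists a constant C > 0, depending only on L, such that for every three times continuously differentiable function u : [0,L] → ℝ, sup_{x ∈ [0,L]} |u'(x)| ≤ C [ (∫₀^L u(x)² dx)^{1/4} · (∫₀^L u'''(x)² dx)^{1/4} + (∫₀^L u(x)² dx)^{1/2} ]. -/
open Set MeasureTheory intervalIntegral Filter Real

/-- Cauchy–Schwarz for interval integrals of continuous functions. -/
private lemma cs_ineq (f : ℝ → ℝ) (a b : ℝ) (hab : a ≤ b) (hf : ContinuousOn f (Icc a b)) :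
    (∫ y in a..b, |f y|) ≤ Real.sqrt (b - a) * Real.sqrt (∫ y in a..b, (f y)^2) := by
  have huIcc : uIcc a b = Icc a b := uIcc_of_le hab
  have hif : IntervalIntegrable (fun y => |f y|) volume a b :=
    (huIcc ▸ hf.abs).intervalIntegrable
  have hif2 : IntervalIntegrable (fun y => (f y)^2) volume a b :=
    (huIcc ▸ hf.pow 2).intervalIntegrable
  set I1 := ∫ y in a..b, |f y| with hI1def
  set I2 := ∫ y in a..b, (f y)^2 with hI2def
  have hI1 : 0 ≤ I1 := intervalIntegral.integral_nonneg hab (fun y _ => abs_nonneg _)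
  have hI2 : 0 ≤ I2 := intervalIntegral.integral_nonneg hab (fun y _ => sq_nonneg _)
  have hquad : ∀ c : ℝ, 0 ≤ (b - a) * (c * c) + (-2*I1) * c + I2 := by
    intro c
    have h0 : (0:ℝ) ≤ ∫ y in a..b, (|f y| - c)^2 :=
      intervalIntegral.integral_nonneg hab (fun y _ => sq_nonneg _)
    have hexp : (∫ y in a..b, (|f y| - c)^2)
        = I2 - (2*c)*I1 + (b-a)*c^2 := by
      have hpt : ∀ y, (|f y| - c)^2 = ((f y)^2 - (2*c)*|f y|) + c^2 := by
        intro y; rw [sub_sq, sq_abs]; ring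
      simp_rw [hpt]
      rw [intervalIntegral.integral_add (hif2.sub (hif.const_mul (2*c)))
            intervalIntegrable_const,
          intervalIntegral.integral_sub hif2 (hif.const_mul (2*c)),
          intervalIntegral.integral_const_mul, intervalIntegral.integral_const]
      simp only [smul_eq_mul, ← hI1def, ← hI2def]
    nlinarith [h0, hexp]
  have hdis := discrim_le_zero hquad
  have hkey : I1^2 ≤ (b-a) * I2 := by
    simp only [discrim] at hdis; nlinarith [hdis]
  calc I1 = Real.sqrt (I1^2) := (Real.sqrt_sq hI1).symm
    _ ≤ Real.sqrt ((b-a) * I2) := Real.sqrt_le_sqrt hkey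
    _ = Real.sqrt (b-a) * Real.sqrt I2 := Real.sqrt_mul (by linarith) _

/-- Integral of a quartic polynomial in normalized coordinates. -/
private lemma poly5 (a ℓ : ℝ) (hℓ : ℓ ≠ 0) (c0 c1 c2 c3 c4 : ℝ) :
    (∫ y in a..(a+ℓ), (c0 + c1*((y-a)/ℓ) + c2*((y-a)/ℓ)^2 + c3*((y-a)/ℓ)^3 + c4*((y-a)/ℓ)^4))
      = ℓ*(c0 + c1/2 + c2/3 + c3/4 + c4/5) := by
  have ht : ∀ y : ℝ, HasDerivAt (fun y => (y - a)/ℓ) (1/ℓ) y := fun y =>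
    ((hasDerivAt_id y).sub_const a).div_const ℓ
  have hF : ∀ y : ℝ, HasDerivAt
      (fun y => ℓ*(c0*((y-a)/ℓ) + c1/2*((y-a)/ℓ)^2 + c2/3*((y-a)/ℓ)^3
        + c3/4*((y-a)/ℓ)^4 + c4/5*((y-a)/ℓ)^5))
      (c0 + c1*((y-a)/ℓ) + c2*((y-a)/ℓ)^2 + c3*((y-a)/ℓ)^3 + c4*((y-a)/ℓ)^4) y := by
    intro y
    have h := (((((((ht y).const_mul c0).add (((ht y).pow 2).const_mul (c1/2))).add
      (((ht y).pow 3).const_mul (c2/3))).add (((ht y).pow 4).const_mul (c3/4))).add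
      (((ht y).pow 5).const_mul (c4/5)))).const_mul ℓ
    refine h.congr_deriv ?_
    norm_num
    field_simp
  have hint : IntervalIntegrable
      (fun y => c0 + c1*((y-a)/ℓ) + c2*((y-a)/ℓ)^2 + c3*((y-a)/ℓ)^3 + c4*((y-a)/ℓ)^4)
      volume a (a+ℓ) := by
    apply Continuous.intervalIntegrable
    fun_prop
  rw [intervalIntegral.integral_eq_sub_of_hasDerivAt (fun y _ => hF y) hint]
  have h1 : (a + ℓ - a)/ℓ = 1 := by field_simp; ring
  have h0 : (a - a)/ℓ = 0 := by simp
  rw [h1, h0]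
  ring


section Helpers

variable {a b x y : ℝ} {f : ℝ → ℝ}

/-- sub-interval monotonicity for |∫| with nonneg extension -/
private lemma sub_integral_abs_le (f : ℝ → ℝ) (a b x y : ℝ)
    (hf : ContinuousOn f (Icc a b)) (hx : x ∈ Icc a b) (hy : y ∈ Icc a b) :
    |∫ t in x..y, f t| ≤ ∫ t in a..b, |f t| := by
  have hab : a ≤ b := hx.1.trans hx.2
  have huIcc : uIcc a b = Icc a b := uIcc_of_le hab
  have habsint : IntervalIntegrable (fun t => |f t|) volume a b :=
    (huIcc ▸ hf.abs).intervalIntegrable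
  have key : ∀ p q : ℝ, p ≤ q → p ∈ Icc a b → q ∈ Icc a b →
      |∫ t in p..q, f t| ≤ ∫ t in a..b, |f t| := by
    intro p q hpq hp hq
    have hsub : uIcc p q ⊆ Icc a b := by
      rw [uIcc_of_le hpq]; exact Icc_subset_Icc hp.1 hq.2
    calc |∫ t in p..q, f t| ≤ ∫ t in p..q, |f t| :=
          intervalIntegral.abs_integral_le_integral_abs hpq
      _ ≤ ∫ t in a..b, |f t| := by
          apply intervalIntegral.integral_mono_interval hp.1 hpq hq.2
          · exact Eventually.of_forall fun t => abs_nonneg _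
          · exact habsint
  rcases le_total x y with h | h
  · exact key x y h hx hy
  · rw [intervalIntegral.integral_symm, abs_neg]; exact key y x h hy hx

end Helpers

private lemma key_bound
    (a ℓ : ℝ) (hℓ : 0 < ℓ)
    (u u' u'' u''' : ℝ → ℝ)
    (hu : ∀ y ∈ Icc a (a+ℓ), HasDerivWithinAt u (u' y) (Icc a (a+ℓ)) y)
    (hu1 : ∀ y ∈ Icc a (a+ℓ), HasDerivWithinAt u' (u'' y) (Icc a (a+ℓ)) y)
    (hu2 : ∀ y ∈ Icc a (a+ℓ), HasDerivWithinAt u'' (u''' y) (Icc a (a+ℓ)) y)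
    (hc : ContinuousOn u''' (Icc a (a+ℓ)))
    (x : ℝ) (hx : x ∈ Icc a (a+ℓ)) :
    |u' x| ≤ 1188 * (Real.sqrt ℓ / ℓ^2 * Real.sqrt (∫ y in a..(a+ℓ), (u y)^2)
        + ℓ * Real.sqrt ℓ * Real.sqrt (∫ y in a..(a+ℓ), (u''' y)^2)) := by
  have hab : a ≤ a + ℓ := by linarith
  have huIcc : uIcc a (a+ℓ) = Icc a (a+ℓ) := uIcc_of_le hab
  have hℓ' : ℓ ≠ 0 := hℓ.ne'
  have hcu : ContinuousOn u (Icc a (a+ℓ)) := fun y hy => (hu y hy).continuousWithinAt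
  have hcu1 : ContinuousOn u' (Icc a (a+ℓ)) := fun y hy => (hu1 y hy).continuousWithinAt
  have hcu2 : ContinuousOn u'' (Icc a (a+ℓ)) := fun y hy => (hu2 y hy).continuousWithinAt
  set s := (x - a)/ℓ with hs
  have hs0 : 0 ≤ s := div_nonneg (by linarith [hx.1]) hℓ.le
  have hs1 : s ≤ 1 := (div_le_one hℓ).2 (by linarith [hx.2])
  have hxa : x = a + s*ℓ := by rw [hs]; field_simp; ring
  -- the kernel
  set K : ℝ → ℝ := fun y =>
    ((60*s-36) + (192-360*s)*((y-a)/ℓ) + (360*s-180)*((y-a)/ℓ)^2) / ℓ^2 with hK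
  have hKcont : Continuous K := by rw [hK]; fun_prop
  have hKbd : ∀ y ∈ Icc a (a+ℓ), |K y| ≤ 1188/ℓ^2 := by
    intro y hy
    set t := (y-a)/ℓ with htdef
    have ht0 : 0 ≤ t := div_nonneg (by linarith [hy.1]) hℓ.le
    have ht1 : t ≤ 1 := (div_le_one hℓ).2 (by linarith [hy.2])
    have ht2 : t^2 ≤ 1 := pow_le_one₀ ht0 ht1
    have ht2' : 0 ≤ t^2 := sq_nonneg t
    have hst : 0 ≤ s*t := mul_nonneg hs0 ht0
    have hst1 : s*t ≤ 1 := mul_le_one₀ hs1 ht0 ht1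
    have hst2 : 0 ≤ s*t^2 := mul_nonneg hs0 ht2'
    have hst2' : s*t^2 ≤ 1 := mul_le_one₀ hs1 ht2' ht2
    have hnum : |(60*s-36) + (192-360*s)*t + (360*s-180)*t^2| ≤ 1188 := by
      rw [abs_le]; constructor <;> nlinarith
    rw [hK]
    simp only []
    rw [abs_div, abs_of_pos (by positivity : (0:ℝ) < ℓ^2)]
    gcongr
  -- Taylor polynomial and remainder
  set P : ℝ → ℝ := fun y => u x + u' x * (y-x) + u'' x/2 * (y-x)^2 with hP
  set R : ℝ → ℝ := fun y => u y - P y with hR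
  have hPcont : Continuous P := by rw [hP]; fun_prop
  have hRcont : ContinuousOn R (Icc a (a+ℓ)) := hcu.sub hPcont.continuousOn
  -- combined moment identity : ∫ K P = u' x
  have hMom : (∫ y in a..(a+ℓ), K y * P y) = u' x := by
    set α := 60*s-36 with hα
    set β := 192-360*s with hβ
    set γ := 360*s-180 with hγ
    set p0 := u x - u' x*(s*ℓ) + u'' x/2*(s*ℓ)^2 with hp0
    set p1 := u' x*ℓ - u'' x*s*ℓ^2 with hp1
    set p2 := u'' x/2*ℓ^2 with hp2
    have hcoef : ∀ y : ℝ, K y * P y =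
        (α*p0)/ℓ^2 + ((α*p1+β*p0)/ℓ^2)*((y-a)/ℓ) + ((α*p2+β*p1+γ*p0)/ℓ^2)*((y-a)/ℓ)^2
          + ((β*p2+γ*p1)/ℓ^2)*((y-a)/ℓ)^3 + ((γ*p2)/ℓ^2)*((y-a)/ℓ)^4 := by
      intro y
      rw [hK, hP, hα, hβ, hγ, hp0, hp1, hp2, hxa]
      field_simp
      ring
    calc (∫ y in a..(a+ℓ), K y * P y)
        = ∫ y in a..(a+ℓ), ((α*p0)/ℓ^2 + ((α*p1+β*p0)/ℓ^2)*((y-a)/ℓ)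
            + ((α*p2+β*p1+γ*p0)/ℓ^2)*((y-a)/ℓ)^2
            + ((β*p2+γ*p1)/ℓ^2)*((y-a)/ℓ)^3 + ((γ*p2)/ℓ^2)*((y-a)/ℓ)^4) := by
          exact intervalIntegral.integral_congr (fun y _ => hcoef y)
      _ = ℓ*((α*p0)/ℓ^2 + ((α*p1+β*p0)/ℓ^2)/2 + ((α*p2+β*p1+γ*p0)/ℓ^2)/3
            + ((β*p2+γ*p1)/ℓ^2)/4 + ((γ*p2)/ℓ^2)/5) := poly5 a ℓ hℓ' _ _ _ _ _
      _ = u' x := by rw [hα, hβ, hγ, hp0, hp1, hp2]; field_simp; ring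
  -- integrability facts
  have hiKu : IntervalIntegrable (fun y => K y * u y) volume a (a+ℓ) :=
    (huIcc ▸ (hKcont.continuousOn.mul hcu)).intervalIntegrable
  have hiKP : IntervalIntegrable (fun y => K y * P y) volume a (a+ℓ) :=
    ((hKcont.mul hPcont).continuousOn).intervalIntegrable
  have hiKR : IntervalIntegrable (fun y => K y * R y) volume a (a+ℓ) :=
    (huIcc ▸ (hKcont.continuousOn.mul hRcont)).intervalIntegrable
  have hsplit : (∫ y in a..(a+ℓ), K y * u y)
      = u' x + ∫ y in a..(a+ℓ), K y * R y := by
    have hpt : ∀ y : ℝ, K y * u y = K y * P y + K y * R y := by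
      intro y; rw [hR]; ring
    calc (∫ y in a..(a+ℓ), K y * u y)
        = ∫ y in a..(a+ℓ), (K y * P y + K y * R y) :=
          intervalIntegral.integral_congr (fun y _ => hpt y)
      _ = (∫ y in a..(a+ℓ), K y * P y) + ∫ y in a..(a+ℓ), K y * R y :=
          intervalIntegral.integral_add hiKP hiKR
      _ = u' x + ∫ y in a..(a+ℓ), K y * R y := by rw [hMom]
  -- remainder estimates
  set M := ∫ t in a..(a+ℓ), |u''' t| with hMdef
  have hM0 : 0 ≤ M := intervalIntegral.integral_nonneg hab (fun t _ => abs_nonneg _)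
  have hg2 : ∀ y ∈ Icc a (a+ℓ), |u'' y - u'' x| ≤ M := by
    intro y hy
    have hsub : uIcc x y ⊆ Icc a (a+ℓ) := uIcc_subset_Icc hx hy
    have hftc : (∫ t in x..y, u''' t) = u'' y - u'' x := by
      apply intervalIntegral.integral_eq_sub_of_hasDeriv_right (hcu2.mono hsub)
      · intro t ht
        have htI : t ∈ Ioo a (a+ℓ) :=
          ⟨lt_of_le_of_lt (le_min hx.1 hy.1) ht.1, lt_of_lt_of_le ht.2 (max_le hx.2 hy.2)⟩
        exact ((hu2 t (Ioo_subset_Icc_self htI)).hasDerivAt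
          (Icc_mem_nhds htI.1 htI.2)).hasDerivWithinAt
      · exact (hc.mono hsub).intervalIntegrable
    rw [← hftc]
    exact sub_integral_abs_le u''' a (a+ℓ) x y hc hx hy
  -- first order remainder
  set g1 : ℝ → ℝ := fun y => u' y - (u' x + u'' x * (y - x)) with hg1def
  have hg1cont : ContinuousOn g1 (Icc a (a+ℓ)) := by
    rw [hg1def]; exact hcu1.sub (by fun_prop)
  have hg1 : ∀ y ∈ Icc a (a+ℓ), |g1 y| ≤ M * ℓ := by
    intro y hy
    have hsub : uIcc x y ⊆ Icc a (a+ℓ) := uIcc_subset_Icc hx hy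
    have hftc : (∫ t in x..y, (u'' t - u'' x)) = g1 y - g1 x := by
      apply intervalIntegral.integral_eq_sub_of_hasDeriv_right (hg1cont.mono hsub)
      · intro t ht
        have htI : t ∈ Ioo a (a+ℓ) :=
          ⟨lt_of_le_of_lt (le_min hx.1 hy.1) ht.1, lt_of_lt_of_le ht.2 (max_le hx.2 hy.2)⟩
        have h1 : HasDerivAt u' (u'' t) t :=
          (hu1 t (Ioo_subset_Icc_self htI)).hasDerivAt (Icc_mem_nhds htI.1 htI.2)
        have h2 : HasDerivAt (fun y => u' x + u'' x * (y - x)) (u'' x) t := by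
          simpa using (((hasDerivAt_id t).sub_const x).const_mul (u'' x)).const_add (u' x)
        exact (h1.sub h2).hasDerivWithinAt
      · exact ((hcu2.sub continuousOn_const).mono hsub).intervalIntegrable
    have hg1x : g1 x = 0 := by rw [hg1def]; simp
    have hbd : |∫ t in x..y, (u'' t - u'' x)| ≤ M * |y - x| := by
      have := intervalIntegral.norm_integral_le_of_norm_le_const
        (f := fun t => u'' t - u'' x) (a := x) (b := y) (C := M) ?_
      · simpa [Real.norm_eq_abs] using this
      · intro t ht
        have htI : t ∈ Icc a (a+ℓ) := (Set.uIoc_subset_uIcc.trans (uIcc_subset_Icc hx hy)) ht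
        simpa [Real.norm_eq_abs] using hg2 t htI
    have hyx : |y - x| ≤ ℓ := abs_le.2 ⟨by linarith [hy.1, hx.2], by linarith [hy.2, hx.1]⟩
    calc |g1 y| = |∫ t in x..y, (u'' t - u'' x)| := by rw [hftc, hg1x, sub_zero]
      _ ≤ M * |y - x| := hbd
      _ ≤ M * ℓ := mul_le_mul_of_nonneg_left hyx hM0
  -- zeroth order remainder
  have hRbd : ∀ y ∈ Icc a (a+ℓ), |R y| ≤ M * ℓ * ℓ := by
    intro y hy
    have hsub : uIcc x y ⊆ Icc a (a+ℓ) := uIcc_subset_Icc hx hy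
    have hftc : (∫ t in x..y, g1 t) = R y - R x := by
      apply intervalIntegral.integral_eq_sub_of_hasDeriv_right (hRcont.mono hsub)
      · intro t ht
        have htI : t ∈ Ioo a (a+ℓ) :=
          ⟨lt_of_le_of_lt (le_min hx.1 hy.1) ht.1, lt_of_lt_of_le ht.2 (max_le hx.2 hy.2)⟩
        have h1 : HasDerivAt u (u' t) t :=
          (hu t (Ioo_subset_Icc_self htI)).hasDerivAt (Icc_mem_nhds htI.1 htI.2)
        have h2 : HasDerivAt P (u' x + u'' x * (t - x)) t := by
          rw [hP]
          have hid : HasDerivAt (fun y : ℝ => y - x) 1 t := (hasDerivAt_id' t).sub_const x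
          have hq := (hid.pow 2).const_mul (u'' x/2)
          have hl := hid.const_mul (u' x)
          exact (((hl.const_add (u x)).add hq).congr_deriv (by push_cast; ring))
        have : HasDerivAt R (u' t - (u' x + u'' x * (t - x))) t := by
          rw [hR]; exact h1.sub h2
        exact this.hasDerivWithinAt
      · exact (hg1cont.mono hsub).intervalIntegrable
    have hRx : R x = 0 := by rw [hR, hP]; simp
    have hbd : |∫ t in x..y, g1 t| ≤ (M * ℓ) * |y - x| := by
      have := intervalIntegral.norm_integral_le_of_norm_le_const
        (f := g1) (a := x) (b := y) (C := M * ℓ) ?_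
      · simpa [Real.norm_eq_abs] using this
      · intro t ht
        have htI : t ∈ Icc a (a+ℓ) := (Set.uIoc_subset_uIcc.trans (uIcc_subset_Icc hx hy)) ht
        simpa [Real.norm_eq_abs] using hg1 t htI
    have hyx : |y - x| ≤ ℓ := abs_le.2 ⟨by linarith [hy.1, hx.2], by linarith [hy.2, hx.1]⟩
    calc |R y| = |∫ t in x..y, g1 t| := by rw [hftc, hRx, sub_zero]
      _ ≤ (M * ℓ) * |y - x| := hbd
      _ ≤ M * ℓ * ℓ := mul_le_mul_of_nonneg_left hyx (by positivity)
  -- bound the main term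
  have hiabsu : IntervalIntegrable (fun y => |u y|) volume a (a+ℓ) :=
    (huIcc ▸ hcu.abs).intervalIntegrable
  have hbound1 : |∫ y in a..(a+ℓ), K y * u y|
      ≤ 1188/ℓ^2 * (Real.sqrt ℓ * Real.sqrt (∫ y in a..(a+ℓ), (u y)^2)) := by
    have hcs := cs_ineq u a (a+ℓ) hab hcu
    rw [add_sub_cancel_left] at hcs
    calc |∫ y in a..(a+ℓ), K y * u y| ≤ ∫ y in a..(a+ℓ), |K y * u y| :=
          intervalIntegral.abs_integral_le_integral_abs hab
      _ ≤ ∫ y in a..(a+ℓ), 1188/ℓ^2 * |u y| := by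
          apply intervalIntegral.integral_mono_on hab _ (hiabsu.const_mul _)
          · intro y hy
            rw [abs_mul]
            exact mul_le_mul_of_nonneg_right (hKbd y hy) (abs_nonneg _)
          · exact (huIcc ▸ (hKcont.continuousOn.mul hcu).abs).intervalIntegrable
      _ = 1188/ℓ^2 * ∫ y in a..(a+ℓ), |u y| := intervalIntegral.integral_const_mul _ _
      _ ≤ 1188/ℓ^2 * (Real.sqrt ℓ * Real.sqrt (∫ y in a..(a+ℓ), (u y)^2)) := by
          apply mul_le_mul_of_nonneg_left hcs (by positivity)
  -- bound the remainder term
  have hbound2 : |∫ y in a..(a+ℓ), K y * R y| ≤ (1188/ℓ^2 * (M * ℓ * ℓ)) * ℓ := by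
    have := intervalIntegral.norm_integral_le_of_norm_le_const
      (f := fun y => K y * R y) (a := a) (b := a+ℓ) (C := 1188/ℓ^2 * (M * ℓ * ℓ)) ?_
    · have h' : |a + ℓ - a| = ℓ := by rw [add_sub_cancel_left, abs_of_pos hℓ]
      rw [Real.norm_eq_abs, h'] at this
      exact this
    · intro t ht
      have htI : t ∈ Icc a (a+ℓ) := Set.uIoc_subset_uIcc.trans (le_of_eq huIcc) ht
      rw [Real.norm_eq_abs, abs_mul]
      exact mul_le_mul (hKbd t htI) (hRbd t htI) (abs_nonneg _) (by positivity)
  have hMcs : M ≤ Real.sqrt ℓ * Real.sqrt (∫ y in a..(a+ℓ), (u''' y)^2) := by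
    have hcs := cs_ineq u''' a (a+ℓ) hab hc
    rw [add_sub_cancel_left] at hcs
    exact hcs
  -- assemble
  have hfin : |u' x| ≤ |∫ y in a..(a+ℓ), K y * u y| + |∫ y in a..(a+ℓ), K y * R y| := by
    have : u' x = (∫ y in a..(a+ℓ), K y * u y) - ∫ y in a..(a+ℓ), K y * R y := by
      linarith [hsplit]
    rw [this]
    exact abs_sub _ _
  have e1 : 1188/ℓ^2 * (Real.sqrt ℓ * Real.sqrt (∫ y in a..(a+ℓ), (u y)^2))
      = 1188 * (Real.sqrt ℓ / ℓ^2 * Real.sqrt (∫ y in a..(a+ℓ), (u y)^2)) := by ring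
  have e2 : (1188/ℓ^2 * (M * ℓ * ℓ)) * ℓ = 1188 * (M * ℓ) := by field_simp
  have e3 : 1188 * (M * ℓ) ≤ 1188 * (ℓ * Real.sqrt ℓ * Real.sqrt (∫ y in a..(a+ℓ), (u''' y)^2)) := by
    have : M * ℓ ≤ ℓ * Real.sqrt ℓ * Real.sqrt (∫ y in a..(a+ℓ), (u''' y)^2) := by
      calc M * ℓ ≤ (Real.sqrt ℓ * Real.sqrt (∫ y in a..(a+ℓ), (u''' y)^2)) * ℓ :=
            mul_le_mul_of_nonneg_right hMcs hℓ.le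
        _ = ℓ * Real.sqrt ℓ * Real.sqrt (∫ y in a..(a+ℓ), (u''' y)^2) := by ring
    linarith
  calc |u' x| ≤ |∫ y in a..(a+ℓ), K y * u y| + |∫ y in a..(a+ℓ), K y * R y| := hfin
    _ ≤ 1188/ℓ^2 * (Real.sqrt ℓ * Real.sqrt (∫ y in a..(a+ℓ), (u y)^2))
        + (1188/ℓ^2 * (M * ℓ * ℓ)) * ℓ := add_le_add hbound1 hbound2
    _ ≤ 1188 * (Real.sqrt ℓ / ℓ^2 * Real.sqrt (∫ y in a..(a+ℓ), (u y)^2)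
        + ℓ * Real.sqrt ℓ * Real.sqrt (∫ y in a..(a+ℓ), (u''' y)^2)) := by
      rw [e1, e2]
      linarith [e3]


set_option maxHeartbeats 1000000 in
/-- One-dimensional Gagliardo–Nirenberg interpolation on `[0,L]`:
`‖u'‖_∞ ≤ C (‖u‖₂^{1/2} ‖u'''‖₂^{1/2} + ‖u‖₂)`. -/
theorem gagliardo_nirenberg_sup_deriv
    (L : ℝ) (hL : 0 < L) :
    ∃ C : ℝ, 0 < C ∧
      ∀ u u' u'' u''' : ℝ → ℝ,
        (∀ x ∈ Icc (0:ℝ) L, HasDerivWithinAt u (u' x) (Icc (0:ℝ) L) x) →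
        (∀ x ∈ Icc (0:ℝ) L, HasDerivWithinAt u' (u'' x) (Icc (0:ℝ) L) x) →
        (∀ x ∈ Icc (0:ℝ) L, HasDerivWithinAt u'' (u''' x) (Icc (0:ℝ) L) x) →
        ContinuousOn u''' (Icc (0:ℝ) L) →
        ∀ x ∈ Icc (0:ℝ) L,
          |u' x| ≤ C * ((∫ y in (0:ℝ)..L, (u y) ^ 2) ^ ((1:ℝ) / 4)
                          * (∫ y in (0:ℝ)..L, (u''' y) ^ 2) ^ ((1:ℝ) / 4)
                        + (∫ y in (0:ℝ)..L, (u y) ^ 2) ^ ((1:ℝ) / 2)) := by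
  refine ⟨2376 + 2376 * Real.sqrt L / L^2, by positivity, ?_⟩
  intro u u' u'' u''' hu hu1 hu2 hc x hx
  set C := 2376 + 2376 * Real.sqrt L / L^2 with hC
  have hCpos : 0 < C := by rw [hC]; positivity
  have hC2376 : (2376:ℝ) ≤ C := by
    rw [hC]
    have : 0 ≤ 2376 * Real.sqrt L / L^2 := by positivity
    linarith
  have hL0 : (0:ℝ) ≤ L := hL.le
  set A2 := ∫ y in (0:ℝ)..L, (u y)^2 with hA2def
  set B2 := ∫ y in (0:ℝ)..L, (u''' y)^2 with hB2def
  have hA2 : 0 ≤ A2 := intervalIntegral.integral_nonneg hL0 (fun y _ => sq_nonneg _)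
  have hB2 : 0 ≤ B2 := intervalIntegral.integral_nonneg hL0 (fun y _ => sq_nonneg _)
  set A := Real.sqrt A2 with hAdef
  set B := Real.sqrt B2 with hBdef
  have hA0 : 0 ≤ A := Real.sqrt_nonneg _
  have hB0 : 0 ≤ B := Real.sqrt_nonneg _
  have hrw : A2 ^ ((1:ℝ)/4) * B2 ^ ((1:ℝ)/4) + A2 ^ ((1:ℝ)/2)
      = Real.sqrt A * Real.sqrt B + A := by
    have h4 : ∀ c : ℝ, 0 ≤ c → c ^ ((1:ℝ)/4) = Real.sqrt (Real.sqrt c) := by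
      intro c hcnn
      rw [show (1:ℝ)/4 = (1/2) * (1/2) by norm_num, Real.rpow_mul hcnn,
        ← Real.sqrt_eq_rpow, ← Real.sqrt_eq_rpow]
    rw [h4 A2 hA2, h4 B2 hB2, ← Real.sqrt_eq_rpow, hAdef, hBdef]
  rw [hrw]
  have hcu : ContinuousOn u (Icc 0 L) := fun y hy => (hu y hy).continuousWithinAt
  -- main estimate, valid for any sub-length ℓ
  have main : ∀ ℓ : ℝ, 0 < ℓ → ℓ ≤ L →
      |u' x| ≤ 1188 * (Real.sqrt ℓ / ℓ^2 * A + ℓ * Real.sqrt ℓ * B) := by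
    intro ℓ h1 h2
    set a := min x (L - ℓ) with hadef
    have ha0 : 0 ≤ a := le_min hx.1 (by linarith)
    have haℓ : a + ℓ ≤ L := by
      have : a ≤ L - ℓ := min_le_right _ _
      linarith
    have hxI : x ∈ Icc a (a+ℓ) := by
      constructor
      · exact min_le_left _ _
      · rcases le_total x (L - ℓ) with h | h
        · rw [hadef, min_eq_left h]; linarith
        · rw [hadef, min_eq_right h]; linarith [hx.2]
    have hsubI : Icc a (a+ℓ) ⊆ Icc 0 L := Icc_subset_Icc ha0 haℓ
    have hkey := key_bound a ℓ h1 u u' u'' u'''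
      (fun y hy => (hu y (hsubI hy)).mono hsubI)
      (fun y hy => (hu1 y (hsubI hy)).mono hsubI)
      (fun y hy => (hu2 y (hsubI hy)).mono hsubI)
      (hc.mono hsubI) x hxI
    refine hkey.trans ?_
    have hIu : (∫ y in a..(a+ℓ), (u y)^2) ≤ A2 := by
      rw [hA2def]
      apply intervalIntegral.integral_mono_interval ha0 (by linarith) haℓ
        (Eventually.of_forall fun y => sq_nonneg _)
      exact ((uIcc_of_le hL0) ▸ hcu.pow 2).intervalIntegrable
    have hIw : (∫ y in a..(a+ℓ), (u''' y)^2) ≤ B2 := by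
      rw [hB2def]
      apply intervalIntegral.integral_mono_interval ha0 (by linarith) haℓ
        (Eventually.of_forall fun y => sq_nonneg _)
      exact ((uIcc_of_le hL0) ▸ hc.pow 2).intervalIntegrable
    have hu' : Real.sqrt (∫ y in a..(a+ℓ), (u y)^2) ≤ A := by
      rw [hAdef]; exact Real.sqrt_le_sqrt hIu
    have hw' : Real.sqrt (∫ y in a..(a+ℓ), (u''' y)^2) ≤ B := by
      rw [hBdef]; exact Real.sqrt_le_sqrt hIw
    gcongr
  rcases le_or_gt (L^3 * B) A with hcase | hcase
  · -- small third derivative: use the whole interval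
    have h := main L hL le_rfl
    have hsL : 0 < Real.sqrt L := Real.sqrt_pos.2 hL
    have hstep : L * Real.sqrt L * B ≤ Real.sqrt L / L^2 * A := by
      rw [div_mul_eq_mul_div, le_div_iff₀ (by positivity)]
      nlinarith [mul_le_mul_of_nonneg_left hcase hsL.le]
    have h2 : |u' x| ≤ 2376 * (Real.sqrt L / L^2) * A := by
      calc |u' x| ≤ 1188 * (Real.sqrt L / L^2 * A + L * Real.sqrt L * B) := h
        _ ≤ 2376 * (Real.sqrt L / L^2) * A := by nlinarith [hstep]
    refine h2.trans ?_
    have hprod : 0 ≤ Real.sqrt A * Real.sqrt B := by positivity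
    have hCge : 2376 * (Real.sqrt L / L^2) ≤ C := by
      rw [hC]
      have h1 : 2376 * (Real.sqrt L / L^2) = 2376 * Real.sqrt L / L^2 := by ring
      linarith [h1.le]
    calc 2376 * (Real.sqrt L / L^2) * A ≤ C * A := mul_le_mul_of_nonneg_right hCge hA0
      _ ≤ C * (Real.sqrt A * Real.sqrt B + A) := by nlinarith [hprod, hCpos]
  · have hBpos : 0 < B := by nlinarith [hA0, pow_pos hL 3]
    by_cases hA0' : A = 0
    · -- ‖u‖₂ = 0 : take ℓ → 0
      have hz : |u' x| ≤ 0 := by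
        by_contra hpos
        push_neg at hpos
        set ε := |u' x| with hεdef
        set δ := min 1 (ε/(2*1188*B)) with hδdef
        have hδ0 : 0 < δ := lt_min one_pos (by positivity)
        set ℓ := min L δ with hℓdef
        have hℓ0 : 0 < ℓ := lt_min hL hδ0
        have h := main ℓ hℓ0 (min_le_left _ _)
        rw [hA0'] at h
        have hb1 : ℓ * Real.sqrt ℓ ≤ δ := by
          have h1 : ℓ ≤ δ := min_le_right _ _
          have h2 : Real.sqrt ℓ ≤ 1 := by
            rw [show (1:ℝ) = Real.sqrt 1 by simp]
            exact Real.sqrt_le_sqrt (h1.trans (min_le_left _ _))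
          nlinarith [Real.sqrt_nonneg ℓ, hℓ0.le]
        have hb3 : δ ≤ ε/(2*1188*B) := min_le_right _ _
        have hchain : ε ≤ 1188 * (ℓ * Real.sqrt ℓ * B) := by
          calc ε ≤ 1188 * (Real.sqrt ℓ / ℓ^2 * 0 + ℓ * Real.sqrt ℓ * B) := h
            _ = 1188 * (ℓ * Real.sqrt ℓ * B) := by ring
        have e1 : ℓ * Real.sqrt ℓ * B ≤ δ * B := mul_le_mul_of_nonneg_right hb1 hBpos.le
        have e2 : δ * B ≤ ε / 2376 := by
          have h5 := mul_le_mul_of_nonneg_right hb3 hB0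
          have h6 : ε/(2*1188*B)*B = ε/2376 := by field_simp; ring
          linarith
        linarith
      have habs : 0 ≤ |u' x| := abs_nonneg _
      rw [hA0']
      simp only [Real.sqrt_zero, zero_mul, add_zero, mul_zero]
      linarith
    · have hApos : 0 < A := lt_of_le_of_ne hA0 (Ne.symm hA0')
      set ℓ := (A/B) ^ ((1:ℝ)/3) with hℓdef
      have hABpos : 0 < A/B := div_pos hApos hBpos
      have hℓpos : 0 < ℓ := Real.rpow_pos_of_pos hABpos _
      have hℓ3 : ℓ^3 = A/B := by
        rw [hℓdef, ← Real.rpow_natCast ((A/B) ^ ((1:ℝ)/3)) 3, ← Real.rpow_mul hABpos.le]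
        norm_num
      have hℓL : ℓ ≤ L := by
        have h3 : ℓ^3 ≤ L^3 := by
          rw [hℓ3, div_le_iff₀ hBpos]; nlinarith [hcase]
        exact le_of_pow_le_pow_left₀ (by norm_num) hL0 h3
      have h := main ℓ hℓpos hℓL
      set σ := Real.sqrt ℓ with hσdef
      have hσpos : 0 < σ := Real.sqrt_pos.2 hℓpos
      have hσ2 : σ^2 = ℓ := Real.sq_sqrt hℓpos.le
      have hAeq : A = ℓ^3 * B := by rw [hℓ3]; field_simp
      have hsqA : Real.sqrt A = σ^3 * Real.sqrt B := by
        rw [hAeq, ← hσ2, show ((σ^2)^3 : ℝ) = (σ^3)^2 by ring,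
          Real.sqrt_mul (sq_nonneg _), Real.sqrt_sq (by positivity)]
      have hBsq : Real.sqrt B * Real.sqrt B = B := Real.mul_self_sqrt hB0
      have halg : Real.sqrt ℓ / ℓ^2 * A + ℓ * Real.sqrt ℓ * B
          = 2 * (Real.sqrt A * Real.sqrt B) := by
        rw [hsqA, ← hσdef, hAeq, ← hσ2,
          show σ^3*Real.sqrt B*Real.sqrt B = σ^3*(Real.sqrt B*Real.sqrt B) from mul_assoc _ _ _,
          hBsq]
        field_simp
        ring
      calc |u' x| ≤ 1188 * (2 * (Real.sqrt A * Real.sqrt B)) := by rw [← halg]; exact h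
        _ = 2376 * (Real.sqrt A * Real.sqrt B) := by ring
        _ ≤ C * (Real.sqrt A * Real.sqrt B + A) := by
            nlinarith [mul_nonneg (Real.sqrt_nonneg A) (Real.sqrt_nonneg B), hA0, hCpos, hC2376]
end
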